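/- Let 0 < s ≤ 1, δ > 0, and let S₁ ⊆ ℝ² be a bounded set. Let S₁^δ := {w ∈ ℝ² : dist(w, S₁) < δ} be the open δ-neighbourhood of S₁. Then the two-dimensional Lebesgue measure of S₁^δ satisfies Leb²(S₁^δ) ≥ π·4^{−s}·H^s_∞(S₁)·δ^{2−s}. -/

import Mathlib

open scoped ENNReal Real
open MeasureTheory Metric Set

/-- The `d`-dimensional Hausdorff content of a set:
`H^d_∞(A) = inf { ∑ᵢ (diam Uᵢ)^d : A ⊆ ⋃ᵢ Uᵢ }`. -/
noncomputable def hausdorffContent {X : Type*} [PseudoEMetricSpace X] (d : ℝ) (A : Set X) :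
    ℝ≥0∞ :=
  ⨅ (U : ℕ → Set X) (_ : A ⊆ ⋃ i, U i), ∑' i, EMetric.diam (U i) ^ d

/-- **Volume of a `δ`-neighbourhood from Hausdorff content (inequality (4.16)).**
For `0 < s ≤ 1`, `δ > 0` and a bounded set `S₁ ⊆ ℝ²`, the open `δ`-neighbourhood `S₁^δ`
satisfies `Leb²(S₁^δ) ≥ π·4^{−s}·H^s_∞(S₁)·δ^{2−s}`. -/
theorem volume_thickening_ge_content
    (s δ : ℝ) (hs0 : 0 < s) (hs1 : s ≤ 1) (hδ : 0 < δ)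
    (S₁ : Set (EuclideanSpace ℝ (Fin 2))) (hS₁ : Bornology.IsBounded S₁) :
    ENNReal.ofReal (π * (4 : ℝ) ^ (-s) * δ ^ (2 - s)) * hausdorffContent s S₁
      ≤ volume (Metric.thickening δ S₁) := by
  classical
  -- a maximal 2δ-separated subset of S₁
  have hzorn : ∀ c ⊆ {T : Set (EuclideanSpace ℝ (Fin 2)) |
        T ⊆ S₁ ∧ T.Pairwise fun x y => 2 * δ ≤ dist x y},
      IsChain (· ⊆ ·) c → ∃ ub ∈ {T : Set (EuclideanSpace ℝ (Fin 2)) |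
        T ⊆ S₁ ∧ T.Pairwise fun x y => 2 * δ ≤ dist x y}, ∀ t ∈ c, t ⊆ ub := by
    intro c hc hchain
    refine ⟨⋃₀ c, ⟨sUnion_subset fun t ht => (hc ht).1, ?_⟩,
      fun t ht => subset_sUnion_of_mem ht⟩
    intro x hx y hy hxy
    obtain ⟨a, hac, hxa⟩ := hx
    obtain ⟨b, hbc, hyb⟩ := hy
    rcases eq_or_ne a b with rfl | hab
    · exact (hc hac).2 hxa hyb hxy
    rcases hchain hac hbc hab with h | h
    · exact (hc hbc).2 (h hxa) hyb hxy
    · exact (hc hac).2 hxa (h hyb) hxy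
  obtain ⟨T, hT⟩ := zorn_subset
      {T : Set (EuclideanSpace ℝ (Fin 2)) | T ⊆ S₁ ∧ T.Pairwise fun x y => 2 * δ ≤ dist x y} hzorn
  have hTsub : T ⊆ S₁ := hT.1.1
  have hTsep : T.Pairwise fun x y => 2 * δ ≤ dist x y := hT.1.2
  -- maximality gives the covering property
  have hcov : ∀ x ∈ S₁, ∃ t ∈ T, dist x t < 2 * δ := by
    intro x hx
    by_contra hcon
    push_neg at hcon
    have hxT : x ∉ T := by
      intro hxT
      have := hcon x hxT
      simp only [dist_self] at this
      linarith
    have hins : insert x T ∈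
        {T : Set (EuclideanSpace ℝ (Fin 2)) | T ⊆ S₁ ∧ T.Pairwise fun x y => 2 * δ ≤ dist x y} := by
      refine ⟨insert_subset hx hTsub, hTsep.insert fun y hy hne => ?_⟩
      exact ⟨hcon y hy, by rw [dist_comm]; exact hcon y hy⟩
    have := hT.2 hins (subset_insert x T)
    exact hxT (this (mem_insert x T))
  -- T is finite
  have hTfin : T.Finite := by
    have htb : TotallyBounded T :=
      (hS₁.isCompact_closure.totallyBounded.subset subset_closure).subset hTsub
    obtain ⟨F, hFfin, hFcov⟩ := totallyBounded_iff.mp htb δ hδ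
    have hex : ∀ t ∈ T, ∃ y, y ∈ F ∧ t ∈ ball y δ := by
      intro t ht
      simpa using hFcov ht
    choose! f hf1 hf2 using hex
    refine Set.Finite.of_finite_image (f := f) (hFfin.subset ?_) ?_
    · rintro y ⟨t, ht, rfl⟩; exact hf1 t ht
    · intro t₁ h₁ t₂ h₂ hf
      by_contra hne
      have hsep := hTsep h₁ h₂ hne
      have d₁ : dist t₁ (f t₁) < δ := mem_ball.mp (hf2 t₁ h₁)
      have d₂ : dist t₂ (f t₂) < δ := mem_ball.mp (hf2 t₂ h₂)
      have := dist_triangle t₁ (f t₁) t₂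
      rw [hf] at d₁
      have : dist t₁ t₂ ≤ dist t₁ (f t₂) + dist (f t₂) t₂ := dist_triangle _ _ _
      rw [dist_comm (f t₂) t₂] at this
      linarith
  obtain ⟨n, g, hg⟩ := hTfin.fin_embedding
  -- the covering family
  set U : ℕ → Set (EuclideanSpace ℝ (Fin 2)) := fun i => if h : i < n then ball (g ⟨i, h⟩) (2 * δ) else ∅ with hU
  have hUcov : S₁ ⊆ ⋃ i, U i := by
    intro x hx
    obtain ⟨t, htT, hdist⟩ := hcov x hx
    rw [← hg] at htT
    obtain ⟨j, rfl⟩ := htT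
    refine mem_iUnion.mpr ⟨j, ?_⟩
    simp only [hU, j.isLt, dif_pos, Fin.eta]
    exact mem_ball.mpr hdist
  -- bound the Hausdorff content
  have hdiam : ∀ i, EMetric.diam (U i) ^ s ≤ ENNReal.ofReal ((4 * δ) ^ s) := by
    intro i
    rw [← ENNReal.ofReal_rpow_of_pos (by linarith)]
    refine ENNReal.rpow_le_rpow ?_ hs0.le
    rcases lt_or_ge i n with h | h
    · simp only [hU, dif_pos h]
      refine EMetric.diam_le fun x hx y hy => ?_
      rw [edist_dist]
      refine ENNReal.ofReal_le_ofReal ?_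
      rw [mem_ball] at hx hy
      have h1 := dist_triangle x (g ⟨i, h⟩) y
      rw [dist_comm (g ⟨i, h⟩) y] at h1
      linarith
    · simp [hU, not_lt.mpr h, EMetric.diam]
  have hzero : ∀ i ∉ Finset.range n, EMetric.diam (U i) ^ s = 0 := by
    intro i hi
    rw [Finset.mem_range, not_lt] at hi
    simp [hU, not_lt.mpr hi, ENNReal.zero_rpow_of_pos hs0, EMetric.diam, hs0]
  have hcontent : hausdorffContent s S₁ ≤ (n : ℝ≥0∞) * ENNReal.ofReal ((4 * δ) ^ s) := by
    refine le_trans (iInf₂_le U hUcov) ?_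
    rw [tsum_eq_sum hzero]
    calc ∑ i ∈ Finset.range n, EMetric.diam (U i) ^ s
        ≤ ∑ _i ∈ Finset.range n, ENNReal.ofReal ((4 * δ) ^ s) :=
          Finset.sum_le_sum fun i _ => hdiam i
      _ = (n : ℝ≥0∞) * ENNReal.ofReal ((4 * δ) ^ s) := by
          rw [Finset.sum_const, Finset.card_range, nsmul_eq_mul]
  -- volume of a ball of radius δ
  have hball : ∀ c : EuclideanSpace ℝ (Fin 2), volume (ball c δ) = ENNReal.ofReal (π * δ ^ 2) := by
    intro c
    rw [EuclideanSpace.volume_ball]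
    have hcard : Fintype.card (Fin 2) = 2 := Fintype.card_fin 2
    rw [hcard]
    have h1 : Real.sqrt π ^ 2 / Real.Gamma ((2 : ℕ) / 2 + 1) = π := by
      rw [Real.sq_sqrt Real.pi_nonneg]
      norm_num [Real.Gamma_two]
    rw [h1, ← ENNReal.ofReal_pow hδ.le, ← ENNReal.ofReal_mul (by positivity), mul_comm]
  -- disjoint balls inside the thickening give the volume bound
  have hvol : (n : ℝ≥0∞) * ENNReal.ofReal (π * δ ^ 2) ≤ volume (Metric.thickening δ S₁) := by
    have hdisj : Pairwise (Function.onFun Disjoint fun j : Fin n => ball (g j) δ) := by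
      intro i j hij
      refine ball_disjoint_ball ?_
      have hne : g i ≠ g j := fun h => hij (g.injective h)
      have hi : g i ∈ T := by rw [← hg]; exact mem_range_self i
      have hj : g j ∈ T := by rw [← hg]; exact mem_range_self j
      have := hTsep hi hj hne
      linarith
    have hmeas := measure_iUnion (μ := volume) hdisj fun j : Fin n => measurableSet_ball
    calc (n : ℝ≥0∞) * ENNReal.ofReal (π * δ ^ 2)
        = ∑' j : Fin n, volume (ball (g j) δ) := by
          rw [tsum_fintype]
          simp [hball, Finset.sum_const, Finset.card_univ, nsmul_eq_mul]
      _ = volume (⋃ j : Fin n, ball (g j) δ) := hmeas.symm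
      _ ≤ volume (Metric.thickening δ S₁) := by
          refine measure_mono (iUnion_subset fun j => ?_)
          refine ball_subset_thickening (hTsub ?_) δ
          rw [← hg]; exact mem_range_self j
  -- combine
  have hreal : π * (4 : ℝ) ^ (-s) * δ ^ (2 - s) * (4 * δ) ^ s = π * δ ^ 2 := by
    rw [Real.mul_rpow (by norm_num) hδ.le]
    have h4 : (4 : ℝ) ^ (-s) * 4 ^ s = 1 := by
      rw [← Real.rpow_add (by norm_num)]; simp
    have hδ2 : δ ^ (2 - s) * δ ^ s = δ ^ 2 := by
      rw [← Real.rpow_add hδ, sub_add_cancel, ← Real.rpow_natCast δ 2]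
      norm_num
    calc π * 4 ^ (-s) * δ ^ (2 - s) * (4 ^ s * δ ^ s)
        = π * (4 ^ (-s) * 4 ^ s) * (δ ^ (2 - s) * δ ^ s) := by ring
      _ = π * δ ^ 2 := by rw [h4, hδ2, mul_one]
  calc ENNReal.ofReal (π * (4 : ℝ) ^ (-s) * δ ^ (2 - s)) * hausdorffContent s S₁
      ≤ ENNReal.ofReal (π * (4 : ℝ) ^ (-s) * δ ^ (2 - s)) *
          ((n : ℝ≥0∞) * ENNReal.ofReal ((4 * δ) ^ s)) := by
        exact mul_le_mul_right hcontent _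
    _ = (n : ℝ≥0∞) * (ENNReal.ofReal (π * (4 : ℝ) ^ (-s) * δ ^ (2 - s)) *
          ENNReal.ofReal ((4 * δ) ^ s)) := by ring
    _ = (n : ℝ≥0∞) * ENNReal.ofReal (π * δ ^ 2) := by
        rw [← ENNReal.ofReal_mul (by positivity), hreal]
    _ ≤ volume (Metric.thickening δ S₁) := hvol
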